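/- Let U = ⊕̂_{n} U_n be a unitary representation of a group G given as a Hilbert direct sum over an increasing sequence of closed G-invariant subspaces U_N (U = closure of ∪_N U_N). Let T : U' → V be a continuous G-homomorphism into a G-representation V of finite length, and W the closure of the image. If W' is a closed G-invariant subspace of W containing T(U_N') for all N (where U_N' denotes the corresponding subspaces of the domain), then W' = W; consequently W equals the closure of T(U_N') for some single N. -/

import Mathlib

/-- Exhaustion lemma for discretely decomposable representations.  Let `U'` carry a
(continuous) linear `G`-action with an increasing family of invariant subspaces `UN n`
whose union is dense, let `V` be a continuous `G`-representation of finite length (its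
closed invariant subspaces satisfy the ascending chain condition `hacc`), and let `T` be
a continuous equivariant linear map.  Set `W := closure T(U')`.  Then (1) any closed
`G`-invariant subspace `W' ⊆ W` containing all `T(UN n)` equals `W`; consequently
(2) `W` equals the closure of `T(UN N)` for some single `N`. -/
theorem stmt_18 {G : Type*} [Group G]
    {U' : Type*} [AddCommGroup U'] [Module ℂ U'] [TopologicalSpace U']
    {V : Type*} [AddCommGroup V] [Module ℂ V] [TopologicalSpace V]
    [IsTopologicalAddGroup V] [ContinuousConstSMul ℂ V]
    (ρU : G →* (U' ≃ₗ[ℂ] U')) (ρV : G →* (V ≃ₗ[ℂ] V))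
    (hρVcont : ∀ g : G, Continuous (ρV g))
    (T : U' →ₗ[ℂ] V) (hTcont : Continuous T)
    (hTequiv : ∀ (g : G) (u : U'), T (ρU g u) = ρV g (T u))
    (UN : ℕ → Submodule ℂ U') (hmono : Monotone UN)
    (hUNinv : ∀ (n : ℕ) (g : G), ∀ u ∈ UN n, ρU g u ∈ UN n)
    (hdense : Dense ((↑(⨆ n, UN n) : Set U')))
    (hacc : ∀ C : ℕ → Submodule ℂ V, Monotone C →
      (∀ n, IsClosed ((C n : Set V))) →
      (∀ (n : ℕ) (g : G), ∀ v ∈ C n, ρV g v ∈ C n) →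
      ∃ N, ∀ n, N ≤ n → C n = C N) :
    (∀ W' : Submodule ℂ V, IsClosed ((W' : Set V)) →
      (∀ g : G, ∀ v ∈ W', ρV g v ∈ W') →
      (∀ n : ℕ, ∀ u ∈ UN n, T u ∈ W') →
      W' ≤ (LinearMap.range T).topologicalClosure →
      W' = (LinearMap.range T).topologicalClosure) ∧
    ∃ N : ℕ, ((UN N).map T).topologicalClosure
        = (LinearMap.range T).topologicalClosure := by
  -- Key step: any closed submodule containing all `T(UN n)` contains the closure of range T.
  have key : ∀ W' : Submodule ℂ V, IsClosed ((W' : Set V)) →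
      (∀ n : ℕ, ∀ u ∈ UN n, T u ∈ W') →
      (LinearMap.range T).topologicalClosure ≤ W' := by
    intro W' hclosed hcontain
    have hsub : (T '' ((⨆ n, UN n : Submodule ℂ U') : Set U')) ⊆ (W' : Set V) := by
      rintro v ⟨u, hu, rfl⟩
      rcases (Submodule.mem_iSup_of_directed UN hmono.directed_le).1 hu with ⟨n, hn⟩
      exact hcontain n u hn
    have hrange : (LinearMap.range T : Set V) ⊆ (W' : Set V) := by
      rintro v ⟨u, rfl⟩
      have hu : u ∈ closure ((⨆ n, UN n : Submodule ℂ U') : Set U') := by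
        rw [hdense.closure_eq]; trivial
      have : T u ∈ T '' closure ((⨆ n, UN n : Submodule ℂ U') : Set U') :=
        Set.mem_image_of_mem _ hu
      have h2 : T u ∈ closure (T '' ((⨆ n, UN n : Submodule ℂ U') : Set U')) :=
        image_closure_subset_closure_image hTcont this
      exact hclosed.closure_subset_iff.2 hsub h2
    intro v hv
    have : v ∈ closure (LinearMap.range T : Set V) := hv
    exact hclosed.closure_subset_iff.2 hrange this
  constructor
  · intro W' hclosed _ hcontain hle
    exact le_antisymm hle (key W' hclosed hcontain)
  · set C : ℕ → Submodule ℂ V := fun n => ((UN n).map T).topologicalClosure with hC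
    have hCmono : Monotone C := fun m n h =>
      Submodule.topologicalClosure_mono (Submodule.map_mono (hmono h))
    have hCclosed : ∀ n, IsClosed ((C n : Set V)) := fun n =>
      Submodule.isClosed_topologicalClosure _
    have hCinv : ∀ (n : ℕ) (g : G), ∀ v ∈ C n, ρV g v ∈ C n := by
      intro n g v hv
      have hstab : (ρV g) '' (((UN n).map T : Submodule ℂ V) : Set V)
          ⊆ (((UN n).map T : Submodule ℂ V) : Set V) := by
        rintro w ⟨x, ⟨u, hu, rfl⟩, rfl⟩
        exact ⟨ρU g u, hUNinv n g u hu, hTequiv g u⟩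
      have hv' : v ∈ closure (((UN n).map T : Submodule ℂ V) : Set V) := hv
      have : ρV g v ∈ closure ((ρV g) '' (((UN n).map T : Submodule ℂ V) : Set V)) :=
        image_closure_subset_closure_image (hρVcont g) (Set.mem_image_of_mem _ hv')
      exact closure_mono hstab this
    obtain ⟨N, hN⟩ := hacc C hCmono hCclosed hCinv
    have hall : ∀ n, C n ≤ C N := fun n => by
      rcases le_total n N with h | h
      · exact hCmono h
      · exact (hN n h).le
    refine ⟨N, le_antisymm
      (Submodule.topologicalClosure_mono (LinearMap.map_le_range)) ?_⟩
    exact key (C N) (hCclosed N)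
      (fun n u hu => hall n (Submodule.le_topologicalClosure _ ⟨u, hu, rfl⟩))
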